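/- For a family of light rays emitted from a point source at distance d > 1 from the center of the unit circle and reflected off the circle according to the law of reflection, the reflected rays have an envelope (caustic) that lies entirely inside the unit circle. Concretely: parametrize the reflection point as P(θ) = (cos θ, sin θ); the reflected ray direction is obtained from the incident direction by reflecting across the tangent line at P(θ); then every point of the envelope of this family of lines has norm strictly less than 1. -/

import Mathlib

open Real

/-- The envelope (caustic) of the family of rays emitted from a point source
`S = (d, 0)` with `d > 1` and reflected off the unit circle lies strictly
inside the unit circle.  The reflection point is `P θ = (cos θ, sin θ)`, the
reflected direction is obtained by the law of reflection
`v' = v - 2⟨v, n⟩ n` with unit normal `n = P θ`, the line is encoded by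
`F θ x = 0`, and the envelope consists of the points satisfying the line
equation together with its `θ`-derivative. -/
theorem caustic_inside_unit_circle
    (d : ℝ) (hd : 1 < d)
    (S : ℝ × ℝ) (hS : S = (d, 0))
    (P v r : ℝ → ℝ × ℝ)
    (hP : ∀ θ, P θ = (cos θ, sin θ))
    (hv : ∀ θ, v θ = P θ - S)
    (hr : ∀ θ, r θ = v θ - (2 * ((v θ).1 * (P θ).1 + (v θ).2 * (P θ).2)) • P θ)
    (F : ℝ → ℝ × ℝ → ℝ)
    (hF : ∀ θ x, F θ x = (x.1 - (P θ).1) * (r θ).2 - (x.2 - (P θ).2) * (r θ).1)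
    (θ : ℝ)
    (hadm : 0 < (S - P θ).1 * (P θ).1 + (S - P θ).2 * (P θ).2)
    (x : ℝ × ℝ)
    (hx : F θ x = 0)
    (hx' : deriv (fun φ => F φ x) θ = 0) :
    x.1 ^ 2 + x.2 ^ 2 < 1 := by
  -- rewrite everything explicitly
  have hfun : (fun φ => F φ x) = fun φ =>
      (x.1 - Real.cos φ) * ((2*d) * Real.cos φ * Real.sin φ - Real.sin φ)
      - (x.2 - Real.sin φ) * ((2*d) * Real.cos φ ^ 2 - Real.cos φ - d) := by
    funext φ
    simp [hF, hr, hv, hP, hS]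
    linear_combination (-2*(x.1 * Real.sin φ - Real.cos φ * x.2)) * Real.sin_sq_add_cos_sq φ
  set c := Real.cos θ with hcdef
  set s := Real.sin θ with hsdef
  have pyth : s ^ 2 + c ^ 2 = 1 := Real.sin_sq_add_cos_sq θ
  -- the equation of the line
  have hx1 : (x.1 - c) * ((2*d) * c * s - s) - (x.2 - s) * ((2*d) * c ^ 2 - c - d) = 0 :=
    (congrFun hfun θ).symm.trans hx
  -- the derivative equation
  have hcd : HasDerivAt Real.cos (-Real.sin θ) θ := Real.hasDerivAt_cos θ
  have hsd : HasDerivAt Real.sin (Real.cos θ) θ := Real.hasDerivAt_sin θ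
  have H := (((hasDerivAt_const θ x.1).sub hcd).mul
      ((((hasDerivAt_const θ (2*d)).mul hcd).mul hsd).sub hsd)).sub
    (((hasDerivAt_const θ x.2).sub hsd).mul
      ((((hasDerivAt_const θ (2*d)).mul (hcd.pow 2)).sub hcd).sub_const d))
  rw [hfun] at hx'
  have hx2 := H.deriv.symm.trans hx'
  simp only [Pi.sub_apply, Pi.mul_apply, Pi.pow_apply] at hx2
  -- admissibility gives d * c > 1
  have hdc : 1 < d * c := by
    rw [hP, hS] at hadm
    simp only [Prod.fst_sub, Prod.snd_sub] at hadm
    nlinarith [hadm, pyth]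
  have hc0 : 0 < c := by nlinarith
  have hc1 : c ≤ 1 := by nlinarith [sq_nonneg s]
  have hD : 0 < 2*d^2 - 3*(d*c) + 1 := by nlinarith
  have key1 : x.1 * (2*d^2 - 3*(d*c) + 1) = 2*c*d^2*s^2 + d*(d*c - 1) := by
    linear_combination (s*(4*d*c - 1)) * hx1 + (2*d*c^2 - c - d) * hx2 +
      (2*d^2*c - 4*d^2*c^2*x.1 + 4*d*c*x.1 - x.1 - d - 2*d^2*x.1) * pyth
  have key2 : x.2 * (2*d^2 - 3*(d*c) + 1) = 2*d^2*s^3 := by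
    linear_combination (-(2*(2*d*c^2 - c - d) + c)) * hx1 + (s*(2*d*c - 1)) * hx2 +
      (-2*d^2*s + 4*d^2*c*s*x.1 + 6*d*c*x.2 - 8*d^2*c^2*x.2 - 2*d*s*x.1 - x.2) * pyth
  have hmain : (2*c*d^2*s^2 + d*(d*c - 1))^2 + (2*d^2*s^3)^2
      < (2*d^2 - 3*(d*c) + 1)^2 := by
    have hG : (2*d^2 - 3*(d*c) + 1)^2 - ((2*c*d^2*s^2 + d*(d*c - 1))^2 + (2*d^2*s^3)^2)
        = (d*c - 1)^2 * (3*d^2 - 4*(d*c) + 1) := by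
      linear_combination (4*d^3*c - 4*d^4 - 4*d^4*s^2 - 4*d^4*s^4) * pyth
    have hpos : 0 < (d*c - 1)^2 * (3*d^2 - 4*(d*c) + 1) :=
      mul_pos (pow_pos (sub_pos.2 hdc) 2) (by nlinarith)
    linarith [hG, hpos]
  have hfinal : (x.1^2 + x.2^2) * (2*d^2 - 3*(d*c) + 1)^2 < 1 * (2*d^2 - 3*(d*c) + 1)^2 := by
    calc (x.1^2 + x.2^2) * (2*d^2 - 3*(d*c) + 1)^2
        = (x.1 * (2*d^2 - 3*(d*c) + 1))^2 + (x.2 * (2*d^2 - 3*(d*c) + 1))^2 := by ring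
      _ = (2*c*d^2*s^2 + d*(d*c - 1))^2 + (2*d^2*s^3)^2 := by rw [key1, key2]
      _ < (2*d^2 - 3*(d*c) + 1)^2 := hmain
      _ = 1 * (2*d^2 - 3*(d*c) + 1)^2 := by ring
  exact lt_of_mul_lt_mul_right (by linarith [hfinal]) (le_of_lt (pow_pos hD 2))
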